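/- Let A, B > 0 and 0 < α < 2 < β. Define Ψ : ℝ → ℝ by Ψ(s) = A e^{2s}/2 − B e^{βs}/β + C e^{αs}/α with C < 0 (defocusing case μ < 0, C = μ|u|_q^q factor absorbed). Then Ψ(s) → 0⁺ as s → −∞, Ψ(s) → −∞ as s → +∞, Ψ has a unique critical point t₀ ∈ ℝ, and t₀ is a strict global maximum of Ψ with Ψ(t₀) > 0. Moreover Ψ is strictly decreasing on (t₀, ∞), and Ψ'(0) < 0 implies t₀ < 0. -/

import Mathlib

open Real Filter Topology Set

/-- Defocusing fiber map (Lemma 7.2): for `A, B > 0`, `C < 0` (here `C = μ|u|_q^q`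
with `μ < 0`, appearing with the minus sign of the fiber map), `0 < α < 2 < β`, the map
`Ψ(s) = A e^{2s}/2 − (B/β) e^{βs} − (C/α) e^{αs}` satisfies: `Ψ(s) → 0⁺` as `s → −∞`,
`Ψ(s) → −∞` as `s → +∞`, `Ψ` has a unique critical point `t₀`, which is a strict global
maximum with `Ψ(t₀) > 0`; moreover `Ψ` is strictly decreasing on `(t₀, ∞)`, and
`Ψ'(0) < 0` implies `t₀ < 0`. -/
theorem stmt4 (A B C α β : ℝ) (hA : 0 < A) (hB : 0 < B) (hC : C < 0)
    (hα0 : 0 < α) (hα2 : α < 2) (hβ : 2 < β)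
    (Ψ : ℝ → ℝ)
    (hΨ : ∀ s, Ψ s = A * Real.exp (2 * s) / 2 - B * Real.exp (β * s) / β
      - C * Real.exp (α * s) / α) :
    Tendsto Ψ atBot (𝓝 0) ∧ (∀ᶠ s in atBot, 0 < Ψ s) ∧
    Tendsto Ψ atTop atBot ∧
    ∃ t₀ : ℝ, (∀ s : ℝ, deriv Ψ s = 0 ↔ s = t₀) ∧
      0 < Ψ t₀ ∧ (∀ s : ℝ, s ≠ t₀ → Ψ s < Ψ t₀) ∧
      StrictAntiOn Ψ (Set.Ioi t₀) ∧
      (deriv Ψ 0 < 0 → t₀ < 0) := by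
  have hβ0 : (0:ℝ) < β := by linarith
  have hΨeq : Ψ = fun s => A * Real.exp (2 * s) / 2 - B * Real.exp (β * s) / β
      - C * Real.exp (α * s) / α := funext hΨ
  subst hΨeq
  set Ψ : ℝ → ℝ := fun s => A * Real.exp (2 * s) / 2 - B * Real.exp (β * s) / β
      - C * Real.exp (α * s) / α with hΨdef
  set h : ℝ → ℝ := fun s => A - B * Real.exp ((β - 2) * s) - C * Real.exp ((α - 2) * s)
    with hh
  -- derivative
  have hderiv : ∀ s : ℝ, HasDerivAt Ψ (Real.exp (2 * s) * h s) s := by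
    intro s
    have h1 : HasDerivAt (fun s : ℝ => Real.exp (2 * s)) (Real.exp (2 * s) * 2) s :=
      by simpa using ((hasDerivAt_id s).const_mul 2).exp
    have h2 : HasDerivAt (fun s : ℝ => Real.exp (β * s)) (Real.exp (β * s) * β) s :=
      by simpa using ((hasDerivAt_id s).const_mul β).exp
    have h3 : HasDerivAt (fun s : ℝ => Real.exp (α * s)) (Real.exp (α * s) * α) s :=
      by simpa using ((hasDerivAt_id s).const_mul α).exp
    have H := (((h1.const_mul A).div_const 2).sub ((h2.const_mul B).div_const β)).sub
      ((h3.const_mul C).div_const α)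
    refine H.congr_deriv ?_
    symm
    have e1 : β * s = 2 * s + (β - 2) * s := by ring
    have e2 : α * s = 2 * s + (α - 2) * s := by ring
    rw [hh]
    simp only []
    rw [e1, e2, Real.exp_add, Real.exp_add]
    field_simp
  have hderiv' : ∀ s : ℝ, deriv Ψ s = Real.exp (2 * s) * h s := fun s => (hderiv s).deriv
  -- h is strictly decreasing
  have hanti : StrictAnti h := by
    intro a b hab
    have e1 : Real.exp ((β - 2) * a) < Real.exp ((β - 2) * b) := by
      apply Real.exp_lt_exp.2
      have : (0:ℝ) < β - 2 := by linarith
      nlinarith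
    have e2 : Real.exp ((α - 2) * b) < Real.exp ((α - 2) * a) := by
      apply Real.exp_lt_exp.2
      have : α - 2 < 0 := by linarith
      nlinarith
    simp only [hh]
    nlinarith
  -- h → +∞ at -∞
  have htopbot : Tendsto h atBot atTop := by
    have t1 : Tendsto (fun s : ℝ => (α - 2) * s) atBot atTop :=
      tendsto_const_mul_atTop_of_neg (by linarith) |>.2 tendsto_id
    have t2 : Tendsto (fun s : ℝ => (β - 2) * s) atBot atBot :=
      tendsto_const_mul_atBot_of_pos (by linarith) |>.2 tendsto_id
    have t3 : Tendsto (fun s : ℝ => A - B * Real.exp ((β - 2) * s)) atBot (𝓝 (A - B * 0)) :=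
      tendsto_const_nhds.sub ((Real.tendsto_exp_atBot.comp t2).const_mul B)
    have t4 : Tendsto (fun s : ℝ => -C * Real.exp ((α - 2) * s)) atBot atTop :=
      (Real.tendsto_exp_atTop.comp t1).const_mul_atTop (by linarith)
    have := t3.add_atTop t4
    refine this.congr (fun s => by simp only [hh]; ring)
  -- h → -∞ at +∞
  have hbottop : Tendsto h atTop atBot := by
    have t1 : Tendsto (fun s : ℝ => (α - 2) * s) atTop atBot :=
      tendsto_const_mul_atBot_of_neg (by linarith) |>.2 tendsto_id
    have t2 : Tendsto (fun s : ℝ => (β - 2) * s) atTop atTop :=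
      tendsto_const_mul_atTop_of_pos (by linarith) |>.2 tendsto_id
    have t3 : Tendsto (fun s : ℝ => A - C * Real.exp ((α - 2) * s)) atTop (𝓝 (A - C * 0)) :=
      tendsto_const_nhds.sub ((Real.tendsto_exp_atBot.comp t1).const_mul C)
    have t4 : Tendsto (fun s : ℝ => -(B * Real.exp ((β - 2) * s))) atTop atBot :=
      tendsto_neg_atBot_iff.2 ((Real.tendsto_exp_atTop.comp t2).const_mul_atTop hB)
    have := t3.add_atBot t4
    refine this.congr (fun s => by simp only [hh]; ring)
  -- existence of zero of h
  have hcont : Continuous h := by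
    simp only [hh]; fun_prop
  obtain ⟨a, ha⟩ := (htopbot.eventually (eventually_gt_atTop 0)).exists
  obtain ⟨b, hb⟩ := (hbottop.eventually (eventually_lt_atBot 0)).exists
  have hab : a < b := by
    by_contra hle
    push_neg at hle
    rcases eq_or_lt_of_le hle with rfl | hlt
    · linarith
    · have := hanti hlt; linarith
  obtain ⟨t₀, ht₀mem, ht₀⟩ : ∃ t₀ ∈ Icc a b, h t₀ = 0 := by
    have : (0:ℝ) ∈ Icc (h b) (h a) := ⟨le_of_lt hb, le_of_lt ha⟩
    have := intermediate_value_Icc' (le_of_lt hab) (hcont.continuousOn) this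
    obtain ⟨c, hc, hc0⟩ := this
    exact ⟨c, hc, hc0⟩
  -- sign of h
  have hpos : ∀ s < t₀, 0 < h s := fun s hs => ht₀ ▸ hanti hs
  have hneg : ∀ s, t₀ < s → h s < 0 := fun s hs => by
    have := hanti hs; rw [ht₀] at this; exact this
  have hΨcont : Continuous Ψ := by
    simp only [hΨdef]; fun_prop
  -- monotone pieces
  have hmono : StrictMonoOn Ψ (Iic t₀) := by
    apply strictMonoOn_of_deriv_pos (convex_Iic t₀) hΨcont.continuousOn
    intro x hx
    rw [interior_Iic] at hx
    rw [hderiv']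
    exact mul_pos (Real.exp_pos _) (hpos x hx)
  have hanti2 : StrictAntiOn Ψ (Ici t₀) := by
    apply strictAntiOn_of_deriv_neg (convex_Ici t₀) hΨcont.continuousOn
    intro x hx
    rw [interior_Ici] at hx
    rw [hderiv']
    exact mul_neg_of_pos_of_neg (Real.exp_pos _) (hneg x hx)
  have hglobal : ∀ s : ℝ, s ≠ t₀ → Ψ s < Ψ t₀ := by
    intro s hs
    rcases lt_or_gt_of_ne hs with hlt | hgt
    · exact hmono (mem_Iic.2 (le_of_lt hlt)) (mem_Iic.2 le_rfl) hlt
    · exact hanti2 (mem_Ici.2 le_rfl) (mem_Ici.2 (le_of_lt hgt)) hgt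
  -- eventually positive at -∞
  have hev : ∀ᶠ s in atBot, 0 < Ψ s := by
    have t1 : Tendsto (fun s : ℝ => (2 - α) * s) atBot atBot :=
      tendsto_const_mul_atBot_of_pos (by linarith) |>.2 tendsto_id
    have t2 : Tendsto (fun s : ℝ => (β - α) * s) atBot atBot :=
      tendsto_const_mul_atBot_of_pos (by linarith) |>.2 tendsto_id
    have tk : Tendsto (fun s : ℝ => A * Real.exp ((2 - α) * s) / 2
        - B * Real.exp ((β - α) * s) / β - C / α) atBot
        (𝓝 (A * 0 / 2 - B * 0 / β - C / α)) := by
      exact (((Real.tendsto_exp_atBot.comp t1).const_mul A |>.div_const 2).sub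
        ((Real.tendsto_exp_atBot.comp t2).const_mul B |>.div_const β)).sub tendsto_const_nhds
    have hCα : (0:ℝ) < -(C / α) := by
      have := div_neg_of_neg_of_pos hC hα0; linarith
    have hevk : ∀ᶠ s in atBot, 0 < A * Real.exp ((2 - α) * s) / 2
        - B * Real.exp ((β - α) * s) / β - C / α := by
      have : A * 0 / 2 - B * 0 / β - C / α = -(C/α) := by ring
      rw [this] at tk
      exact tk.eventually (eventually_gt_nhds hCα)
    filter_upwards [hevk] with s hs
    have key : Ψ s = Real.exp (α * s) * (A * Real.exp ((2 - α) * s) / 2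
        - B * Real.exp ((β - α) * s) / β - C / α) := by
      simp only [hΨdef]
      rw [show (2:ℝ) * s = α * s + (2 - α) * s by ring,
        show β * s = α * s + (β - α) * s by ring, Real.exp_add, Real.exp_add]
      ring
    rw [key]
    exact mul_pos (Real.exp_pos _) hs
  -- Ψ → 0 at -∞
  have hzero : Tendsto Ψ atBot (𝓝 0) := by
    have t1 : Tendsto (fun s : ℝ => 2 * s) atBot atBot :=
      tendsto_const_mul_atBot_of_pos (by norm_num) |>.2 tendsto_id
    have t2 : Tendsto (fun s : ℝ => β * s) atBot atBot :=
      tendsto_const_mul_atBot_of_pos hβ0 |>.2 tendsto_id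
    have t3 : Tendsto (fun s : ℝ => α * s) atBot atBot :=
      tendsto_const_mul_atBot_of_pos hα0 |>.2 tendsto_id
    have := (((Real.tendsto_exp_atBot.comp t1).const_mul A |>.div_const 2).sub
      ((Real.tendsto_exp_atBot.comp t2).const_mul B |>.div_const β)).sub
      ((Real.tendsto_exp_atBot.comp t3).const_mul C |>.div_const α)
    simpa using this
  -- Ψ → -∞ at +∞
  have hbot : Tendsto Ψ atTop atBot := by
    have t1 : Tendsto (fun s : ℝ => (2 - β) * s) atTop atBot :=
      tendsto_const_mul_atBot_of_neg (by linarith) |>.2 tendsto_id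
    have t2 : Tendsto (fun s : ℝ => (α - β) * s) atTop atBot :=
      tendsto_const_mul_atBot_of_neg (by linarith) |>.2 tendsto_id
    have t3 : Tendsto (fun s : ℝ => β * s) atTop atTop :=
      tendsto_const_mul_atTop_of_pos hβ0 |>.2 tendsto_id
    have tg : Tendsto (fun s : ℝ => A * Real.exp ((2 - β) * s) / 2 - B / β
        - C * Real.exp ((α - β) * s) / α) atTop (𝓝 (A * 0 / 2 - B / β - C * 0 / α)) :=
      (((Real.tendsto_exp_atBot.comp t1).const_mul A |>.div_const 2).sub
        tendsto_const_nhds).sub ((Real.tendsto_exp_atBot.comp t2).const_mul C |>.div_const α)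
    have hBβ : A * 0 / 2 - B / β - C * 0 / α < 0 := by
      have : (0:ℝ) < B / β := by positivity
      simpa using by linarith
    have := (Real.tendsto_exp_atTop.comp t3).atTop_mul_neg hBβ tg
    refine this.congr (fun s => ?_)
    simp only [hΨdef, Function.comp]
    rw [show (2:ℝ) * s = β * s + (2 - β) * s by ring,
      show α * s = β * s + (α - β) * s by ring, Real.exp_add, Real.exp_add]
    ring
  refine ⟨hzero, hev, hbot, t₀, ?_, ?_, hglobal, hanti2.mono (Ioi_subset_Ici le_rfl), ?_⟩
  · intro s
    rw [hderiv']
    constructor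
    · intro hs
      have : h s = 0 := by
        have := Real.exp_pos (2 * s)
        rcases mul_eq_zero.1 hs with h' | h'
        · linarith
        · exact h'
      exact hanti.injective (this.trans ht₀.symm)
    · rintro rfl
      rw [ht₀, mul_zero]
  · obtain ⟨s, hs1, hs2⟩ := (hev.and (eventually_lt_atBot t₀)).exists
    calc (0:ℝ) < Ψ s := hs1
      _ < Ψ t₀ := hmono (mem_Iic.2 (le_of_lt hs2)) (mem_Iic.2 le_rfl) hs2
  · intro hd
    rw [hderiv'] at hd
    have h0 : h 0 < 0 := by
      have := Real.exp_pos (2 * (0:ℝ))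
      nlinarith
    by_contra hle
    push_neg at hle
    rcases eq_or_lt_of_le hle with rfl | hlt
    · linarith [ht₀]
    · have := hanti hlt; rw [ht₀] at this; linarith
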